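/- The trilinear functional Ψ(f₀,f₁,f₂) = (1/2πi) τ(f₀(∂₁f₁)(∂₂f₂) − f₀(∂₂f₁)(∂₁f₂)) is a Hochschild 2-cocycle: Ψ(f₀f₁,f₂,f₃) − Ψ(f₀,f₁f₂,f₃) + Ψ(f₀,f₁,f₂f₃) − Ψ(f₃f₀,f₁,f₂) = 0. -/

import Mathlib

open MeasureTheory

/-- The twisted product `(f • g)_n(u) = ∑_k f_k(u) g_{n-k}(u + kℏ)`. -/
noncomputable def ncProd (ℏ : ℝ) (f g : ℤ → ℝ → ℂ) : ℤ → ℝ → ℂ :=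
  fun n u => ∑' k : ℤ, f k u * g (n - k) (u + k * ℏ)

/-- `∂₁ f = ∑_n f_n'(u) W^n`. -/
noncomputable def d1 (f : ℤ → ℝ → ℂ) : ℤ → ℝ → ℂ := fun n u => deriv (f n) u

/-- `∂₂ f = 2πi ∑_n n f_n(u) W^n`. -/
noncomputable def d2 (f : ℤ → ℝ → ℂ) : ℤ → ℝ → ℂ :=
  fun n u => 2 * Real.pi * Complex.I * n * f n u

/-- The trace `τ(f) = ∫_ℝ f₀(u) du`. -/
noncomputable def tau (f : ℤ → ℝ → ℂ) : ℂ := ∫ u : ℝ, f 0 u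

/-- `Ψ(f₀,f₁,f₂) = (1/2πi) τ(f₀(∂₁f₁)(∂₂f₂) − f₀(∂₂f₁)(∂₁f₂))`. -/
noncomputable def Psi (ℏ : ℝ) (a b c : ℤ → ℝ → ℂ) : ℂ :=
  (2 * Real.pi * Complex.I)⁻¹ *
    (tau (ncProd ℏ (ncProd ℏ a (d1 b)) (d2 c)) -
      tau (ncProd ℏ (ncProd ℏ a (d2 b)) (d1 c)))


lemma schwartz_htg (φ : SchwartzMap ℝ ℂ) : Function.HasTemperateGrowth ⇑φ := by
  refine ⟨φ.smooth', fun n => ?_⟩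
  obtain ⟨C, hC⟩ := φ.decay 0 n
  exact ⟨0, C, fun x => by simpa using hC.2 x⟩

lemma add_const_htg (c : ℝ) : Function.HasTemperateGrowth (fun x : ℝ => x + c) := by
  apply Function.HasTemperateGrowth.of_fderiv (k := 1) (C := 1 + |c|)
  · have h : (fderiv ℝ fun x : ℝ => x + c) = fun _ => ContinuousLinearMap.id ℝ ℝ := by
      ext x
      rw [fderiv_add_const, fderiv_id']
    rw [h]
    exact .const _
  · exact differentiable_id.add_const c
  · intro x
    have := abs_add_le x c
    simp only [Real.norm_eq_abs, pow_one]
    nlinarith [abs_nonneg x, abs_nonneg c]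

/-- Translation of a Schwartz function. -/
noncomputable def shiftS (c : ℝ) : SchwartzMap ℝ ℂ →L[ℝ] SchwartzMap ℝ ℂ :=
  SchwartzMap.compCLMOfAntilipschitz ℝ (add_const_htg c)
    ((Isometry.of_dist_eq (fun a b => by simp [Real.dist_eq])).antilipschitz)

@[simp] lemma shiftS_apply (c : ℝ) (φ : SchwartzMap ℝ ℂ) (u : ℝ) :
    shiftS c φ u = φ (u + c) := rfl

/-- Product of two Schwartz functions. -/
noncomputable def mulS (φ ψ : SchwartzMap ℝ ℂ) : SchwartzMap ℝ ℂ :=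
  SchwartzMap.bilinLeftCLM (ContinuousLinearMap.mul ℝ ℂ) (schwartz_htg ψ) φ

@[simp] lemma mulS_apply (φ ψ : SchwartzMap ℝ ℂ) (u : ℝ) :
    mulS φ ψ u = φ u * ψ u := rfl


/-- Finitely supported families of Schwartz functions. -/
def Good (f : ℤ → ℝ → ℂ) : Prop :=
  (Function.support f).Finite ∧ ∀ n, ∃ φ : SchwartzMap ℝ ℂ, f n = ⇑φ

lemma good_of_schwartz (f : ℤ → SchwartzMap ℝ ℂ) (h : (Function.support f).Finite) :
    Good (fun n => ⇑(f n)) := by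
  refine ⟨h.subset ?_, fun n => ⟨f n, rfl⟩⟩
  intro n hn
  simp only [Function.mem_support] at hn ⊢
  intro h0
  exact hn (by rw [h0]; rfl)

lemma ncProd_apply_eq_sum {ℏ : ℝ} {f : ℤ → ℝ → ℂ} (g : ℤ → ℝ → ℂ) {s : Finset ℤ}
    (hs : Function.support f ⊆ ↑s) (n : ℤ) (u : ℝ) :
    ncProd ℏ f g n u = ∑ k ∈ s, f k u * g (n - k) (u + k * ℏ) := by
  refine tsum_eq_sum fun k hk => ?_
  have : f k = 0 := Function.notMem_support.mp (fun h => hk (hs h))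
  simp [this]

open Pointwise in
lemma support_ncProd_subset (ℏ : ℝ) (f g : ℤ → ℝ → ℂ) :
    Function.support (ncProd ℏ f g) ⊆ Function.support f + Function.support g := by
  intro n hn
  by_contra hmem
  apply hn
  funext u
  have h0 : ∀ k : ℤ, f k u * g (n - k) (u + k * ℏ) = 0 := by
    intro k
    rcases eq_or_ne (f k) 0 with h | h
    · simp [h]
    · rcases eq_or_ne (g (n - k)) 0 with h' | h'
      · simp [h']
      · exact absurd (by
          have := Set.add_mem_add (Function.mem_support.mpr h) (Function.mem_support.mpr h')
          simpa using this) hmem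
  have : ncProd ℏ f g n u = ∑' k : ℤ, (0 : ℂ) := tsum_congr h0
  simpa using this

lemma schwartz_sum_apply (s : Finset ℤ) (Φ : ℤ → SchwartzMap ℝ ℂ) (u : ℝ) :
    (∑ k ∈ s, Φ k) u = ∑ k ∈ s, Φ k u := by
  classical
  induction s using Finset.cons_induction with
  | empty => simp [SchwartzMap.coe_zero]
  | cons a s ha ih => rw [Finset.sum_cons, Finset.sum_cons, SchwartzMap.add_apply, ih]

open Pointwise in
lemma Good.ncProd {ℏ : ℝ} {f g : ℤ → ℝ → ℂ} (hf : Good f) (hg : Good g) :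
    Good (ncProd ℏ f g) := by
  classical
  obtain ⟨hfs, hfc⟩ := hf
  obtain ⟨hgs, hgc⟩ := hg
  choose F hF using hfc
  choose G hG using hgc
  refine ⟨(hfs.add hgs).subset (support_ncProd_subset ℏ f g), fun n => ?_⟩
  refine ⟨∑ k ∈ hfs.toFinset, mulS (F k) (shiftS (k * ℏ) (G (n - k))), ?_⟩
  funext u
  rw [ncProd_apply_eq_sum (s := hfs.toFinset) g (by simp) n u, schwartz_sum_apply]
  refine Finset.sum_congr rfl fun k _ => ?_
  rw [hF, hG]
  simp

lemma Good.d1 {f : ℤ → ℝ → ℂ} (hf : Good f) : Good (d1 f) := by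
  refine ⟨hf.1.subset fun n hn => ?_, fun n => ?_⟩
  · simp only [Function.mem_support] at hn ⊢
    intro h0
    apply hn
    funext u
    simp only [_root_.d1, h0]
    show deriv (fun _ : ℝ => (0 : ℂ)) u = 0
    simp
  · obtain ⟨φ, hφ⟩ := hf.2 n
    exact ⟨SchwartzMap.derivCLM ℝ ℂ φ, by funext u; simp [_root_.d1, hφ, SchwartzMap.derivCLM_apply]⟩

lemma Good.d2 {f : ℤ → ℝ → ℂ} (hf : Good f) : Good (d2 f) := by
  refine ⟨hf.1.subset fun n hn => ?_, fun n => ?_⟩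
  · simp only [Function.mem_support] at hn ⊢
    intro h0
    apply hn
    funext u
    simp [_root_.d2, h0]
  · obtain ⟨φ, hφ⟩ := hf.2 n
    exact ⟨(2 * Real.pi * Complex.I * n) • φ, by funext u; simp [_root_.d2, hφ, SchwartzMap.smul_apply]⟩

lemma Good.add {f g : ℤ → ℝ → ℂ} (hf : Good f) (hg : Good g) : Good (f + g) := by
  refine ⟨(hf.1.union hg.1).subset (Function.support_add ..), fun n => ?_⟩
  obtain ⟨φ, hφ⟩ := hf.2 n
  obtain ⟨ψ, hψ⟩ := hg.2 n
  exact ⟨φ + ψ, by funext u; simp [hφ, hψ]⟩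

lemma support_d1_subset (f : ℤ → ℝ → ℂ) : Function.support (d1 f) ⊆ Function.support f := by
  intro n hn
  simp only [Function.mem_support] at hn ⊢
  intro h0
  apply hn
  funext u
  simp only [_root_.d1, h0]
  show deriv (fun _ : ℝ => (0 : ℂ)) u = 0
  simp

lemma support_d2_subset (f : ℤ → ℝ → ℂ) : Function.support (d2 f) ⊆ Function.support f := by
  intro n hn
  simp only [Function.mem_support] at hn ⊢
  intro h0
  apply hn
  funext u
  simp [_root_.d2, h0]

lemma ncProd_add_right {ℏ : ℝ} {f : ℤ → ℝ → ℂ} (hf : (Function.support f).Finite)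
    (g₁ g₂ : ℤ → ℝ → ℂ) :
    ncProd ℏ f (g₁ + g₂) = ncProd ℏ f g₁ + ncProd ℏ f g₂ := by
  funext n u
  show ncProd ℏ f (g₁ + g₂) n u = ncProd ℏ f g₁ n u + ncProd ℏ f g₂ n u
  rw [ncProd_apply_eq_sum (s := hf.toFinset) _ (by simp) n u,
    ncProd_apply_eq_sum (s := hf.toFinset) _ (by simp) n u,
    ncProd_apply_eq_sum (s := hf.toFinset) _ (by simp) n u, ← Finset.sum_add_distrib]
  refine Finset.sum_congr rfl fun k _ => ?_
  show f k u * (g₁ (n - k) (u + k * ℏ) + g₂ (n - k) (u + k * ℏ)) = _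
  ring

lemma ncProd_add_left {ℏ : ℝ} {f₁ f₂ : ℤ → ℝ → ℂ} (hf₁ : (Function.support f₁).Finite)
    (hf₂ : (Function.support f₂).Finite) (g : ℤ → ℝ → ℂ) :
    ncProd ℏ (f₁ + f₂) g = ncProd ℏ f₁ g + ncProd ℏ f₂ g := by
  funext n u
  show ncProd ℏ (f₁ + f₂) g n u = ncProd ℏ f₁ g n u + ncProd ℏ f₂ g n u
  have hs : Function.support (f₁ + f₂) ⊆ ↑(hf₁.toFinset ∪ hf₂.toFinset) := by
    refine (Function.support_add _ _).trans ?_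
    simp
  rw [ncProd_apply_eq_sum (s := hf₁.toFinset ∪ hf₂.toFinset) _ hs n u,
    ncProd_apply_eq_sum (s := hf₁.toFinset ∪ hf₂.toFinset) _ (by simp [Finset.subset_union_left]) n u,
    ncProd_apply_eq_sum (s := hf₁.toFinset ∪ hf₂.toFinset) _ (by simp [Finset.subset_union_right]) n u,
    ← Finset.sum_add_distrib]
  refine Finset.sum_congr rfl fun k _ => ?_
  show (f₁ k u + f₂ k u) * _ = _
  ring

lemma d2_ncProd {ℏ : ℝ} {f : ℤ → ℝ → ℂ} (hf : (Function.support f).Finite)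
    (g : ℤ → ℝ → ℂ) :
    d2 (ncProd ℏ f g) = ncProd ℏ (d2 f) g + ncProd ℏ f (d2 g) := by
  funext n u
  show d2 (ncProd ℏ f g) n u = ncProd ℏ (d2 f) g n u + ncProd ℏ f (d2 g) n u
  rw [show d2 (ncProd ℏ f g) n u = 2 * Real.pi * Complex.I * n * ncProd ℏ f g n u from rfl,
    ncProd_apply_eq_sum (s := hf.toFinset) _ (by simp) n u,
    ncProd_apply_eq_sum (s := hf.toFinset) _
      ((support_d2_subset f).trans (by simp)) n u,
    ncProd_apply_eq_sum (s := hf.toFinset) _ (by simp) n u,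
    ← Finset.sum_add_distrib, Finset.mul_sum]
  refine Finset.sum_congr rfl fun k _ => ?_
  simp only [_root_.d2]
  push_cast
  ring

open Pointwise in
lemma ncProd_assoc {ℏ : ℝ} {f g : ℤ → ℝ → ℂ} (hf : (Function.support f).Finite)
    (hg : (Function.support g).Finite) (h : ℤ → ℝ → ℂ) :
    ncProd ℏ (ncProd ℏ f g) h = ncProd ℏ f (ncProd ℏ g h) := by
  classical
  funext n u
  have hsub : Function.support (ncProd ℏ f g) ⊆ ↑(hf.toFinset + hg.toFinset) := by
    refine (support_ncProd_subset ℏ f g).trans ?_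
    rw [Finset.coe_add]
    simp
  rw [ncProd_apply_eq_sum (s := hf.toFinset + hg.toFinset) _ hsub n u,
    ncProd_apply_eq_sum (s := hf.toFinset) _ (by simp) n u]
  have hL : ∀ k ∈ hf.toFinset + hg.toFinset,
      ncProd ℏ f g k u * h (n - k) (u + k * ℏ) =
        ∑ j ∈ hf.toFinset, f j u * g (k - j) (u + j * ℏ) * h (n - k) (u + k * ℏ) := by
    intro k _
    rw [ncProd_apply_eq_sum (s := hf.toFinset) _ (by simp) k u, Finset.sum_mul]
  rw [Finset.sum_congr rfl hL, Finset.sum_comm]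
  refine Finset.sum_congr rfl fun j hj => ?_
  rw [ncProd_apply_eq_sum (s := hg.toFinset) _ (by simp) (n - j) (u + j * ℏ), Finset.mul_sum]
  have hR : ∀ m ∈ hg.toFinset,
      f j u * (g m (u + j * ℏ) * h (n - j - m) (u + j * ℏ + m * ℏ)) =
        (fun k => f j u * g (k - j) (u + j * ℏ) * h (n - k) (u + k * ℏ)) (j + m) := by
    intro m _
    simp only [add_sub_cancel_left]
    have h1 : n - j - m = n - (j + m) := by ring
    have h2 : u + j * ℏ + m * ℏ = u + (↑(j + m) : ℝ) * ℏ := by push_cast; ring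
    rw [h1, h2]
    ring
  rw [Finset.sum_congr rfl hR]
  have hmap := Finset.sum_map hg.toFinset (addLeftEmbedding j)
    (fun k => f j u * g (k - j) (u + (j : ℝ) * ℏ) * h (n - k) (u + (k : ℝ) * ℏ))
  simp only [addLeftEmbedding_apply] at hmap
  rw [← hmap]
  refine (Finset.sum_subset ?_ ?_).symm
  · intro k hk
    simp only [Finset.mem_map, addLeftEmbedding_apply] at hk
    obtain ⟨m, hm, rfl⟩ := hk
    exact Finset.add_mem_add (by simpa using hj) hm
  · intro k hk hk'
    have : g (k - j) = 0 := by
      by_contra hne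
      apply hk'
      simp only [Finset.mem_map, addLeftEmbedding_apply]
      exact ⟨k - j, by simpa using Function.mem_support.mpr hne, by ring⟩
    simp [this]

lemma Good.differentiable {f : ℤ → ℝ → ℂ} (hf : Good f) (n : ℤ) :
    Differentiable ℝ (f n) := by
  obtain ⟨φ, hφ⟩ := hf.2 n
  rw [hφ]
  exact φ.differentiable

lemma d1_ncProd {ℏ : ℝ} {f g : ℤ → ℝ → ℂ} (hf : Good f) (hg : Good g) :
    d1 (ncProd ℏ f g) = ncProd ℏ (d1 f) g + ncProd ℏ f (d1 g) := by
  classical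
  funext n u
  show deriv (ncProd ℏ f g n) u = ncProd ℏ (d1 f) g n u + ncProd ℏ f (d1 g) n u
  have hfun : ncProd ℏ f g n = fun v => ∑ k ∈ hf.1.toFinset,
      f k v * g (n - k) (v + k * ℏ) := by
    funext v
    exact ncProd_apply_eq_sum (s := hf.1.toFinset) _ (by simp) n v
  have hder : HasDerivAt (fun v => ∑ k ∈ hf.1.toFinset, f k v * g (n - k) (v + k * ℏ))
      (∑ k ∈ hf.1.toFinset, (deriv (f k) u * g (n - k) (u + k * ℏ) +
        f k u * deriv (g (n - k)) (u + k * ℏ))) u := by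
    refine HasDerivAt.fun_sum fun k _ => ?_
    have h1 : HasDerivAt (f k) (deriv (f k) u) u :=
      (hf.differentiable k u).hasDerivAt
    have h2 : HasDerivAt (fun v => g (n - k) (v + k * ℏ))
        (deriv (g (n - k)) (u + k * ℏ)) u := by
      exact HasDerivAt.comp_add_const u ((k : ℝ) * ℏ)
        (hg.differentiable (n - k) (u + k * ℏ)).hasDerivAt
    exact h1.mul h2
  rw [hfun, hder.deriv,
    ncProd_apply_eq_sum (s := hf.1.toFinset) _
      ((support_d1_subset f).trans (by simp)) n u,
    ncProd_apply_eq_sum (s := hf.1.toFinset) _ (by simp) n u,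
    ← Finset.sum_add_distrib]
  rfl

lemma Good.integrable {f : ℤ → ℝ → ℂ} (hf : Good f) (n : ℤ) :
    Integrable (f n) (volume : Measure ℝ) := by
  obtain ⟨φ, hφ⟩ := hf.2 n
  rw [hφ]
  exact φ.integrable

lemma integrable_term {f g : ℤ → ℝ → ℂ} (hf : Good f) (hg : Good g) (k m : ℤ) (c : ℝ) :
    Integrable (fun u => f k u * g m (u + c)) (volume : Measure ℝ) := by
  obtain ⟨φ, hφ⟩ := hf.2 k
  obtain ⟨ψ, hψ⟩ := hg.2 m
  have : (fun u => f k u * g m (u + c)) = ⇑(mulS φ (shiftS c ψ)) := by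
    funext u
    simp [hφ, hψ]
  rw [this]
  exact SchwartzMap.integrable _

lemma tau_add {f g : ℤ → ℝ → ℂ} (hf : Good f) (hg : Good g) :
    tau (f + g) = tau f + tau g := by
  show (∫ u : ℝ, (f 0 u + g 0 u)) = (∫ u : ℝ, f 0 u) + ∫ u : ℝ, g 0 u
  exact integral_add (hf.integrable 0) (hg.integrable 0)

lemma tau_comm {ℏ : ℝ} {f g : ℤ → ℝ → ℂ} (hf : Good f) (hg : Good g) :
    tau (ncProd ℏ f g) = tau (ncProd ℏ g f) := by
  classical
  set S : Finset ℤ := hf.1.toFinset ∪ Finset.image Neg.neg hg.1.toFinset with hS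
  have hfS : Function.support f ⊆ ↑S := by
    intro k hk
    simp only [hS, Finset.coe_union, Finset.coe_image, Set.Finite.coe_toFinset,
      Set.mem_union]
    exact Or.inl hk
  have hgT : Function.support g ⊆ ↑(Finset.image Neg.neg S) := by
    intro m hm
    simp only [hS, Finset.coe_image, Finset.coe_union, Set.image_union,
      Set.Finite.coe_toFinset]
    right
    refine ⟨-m, ?_, by simp⟩
    simp only [Set.mem_image, Set.Finite.coe_toFinset]
    exact ⟨m, hm, rfl⟩
  have e1 : tau (ncProd ℏ f g) = ∑ k ∈ S, ∫ u : ℝ, f k u * g (0 - k) (u + k * ℏ) := by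
    show (∫ u : ℝ, ncProd ℏ f g 0 u) = _
    have : (fun u : ℝ => ncProd ℏ f g 0 u) =
        fun u => ∑ k ∈ S, f k u * g (0 - k) (u + k * ℏ) := by
      funext u
      exact ncProd_apply_eq_sum _ hfS 0 u
    rw [this]
    exact integral_finset_sum S fun k _ => integrable_term hf hg k (0 - k) _
  have e2 : tau (ncProd ℏ g f) = ∑ m ∈ Finset.image Neg.neg S,
      ∫ u : ℝ, g m u * f (0 - m) (u + m * ℏ) := by
    show (∫ u : ℝ, ncProd ℏ g f 0 u) = _
    have : (fun u : ℝ => ncProd ℏ g f 0 u) =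
        fun u => ∑ m ∈ Finset.image Neg.neg S, g m u * f (0 - m) (u + m * ℏ) := by
      funext u
      exact ncProd_apply_eq_sum _ hgT 0 u
    rw [this]
    exact integral_finset_sum _ fun m _ => integrable_term hg hf m (0 - m) _
  rw [e1, e2, Finset.sum_image (by intro x _ y _ h; exact neg_injective h)]
  refine Finset.sum_congr rfl fun k _ => ?_
  have key : ∀ u : ℝ, f k u * g (0 - k) (u + k * ℏ) =
      (fun v => g (-k) v * f (0 - -k) (v + (↑(-k : ℤ) : ℝ) * ℏ)) (u + k * ℏ) := by
    intro u
    have h1 : (0 : ℤ) - k = -k := by ring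
    have h2 : (0 : ℤ) - -k = k := by ring
    have h3 : u + (k : ℝ) * ℏ + (↑(-k : ℤ) : ℝ) * ℏ = u := by push_cast; ring
    simp only [h1, h2, h3]
    ring
  calc (∫ u : ℝ, f k u * g (0 - k) (u + k * ℏ))
      = ∫ u : ℝ, (fun v => g (-k) v * f (0 - -k) (v + (↑(-k : ℤ) : ℝ) * ℏ)) (u + k * ℏ) := by
        simp only [key]
    _ = ∫ v : ℝ, g (-k) v * f (0 - -k) (v + (↑(-k : ℤ) : ℝ) * ℏ) :=
        integral_add_right_eq_self (μ := volume)
          (fun v => g (-k) v * f (0 - -k) (v + (↑(-k : ℤ) : ℝ) * ℏ)) ((k : ℝ) * ℏ)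

lemma partA {ℏ : ℝ} (D E : (ℤ → ℝ → ℂ) → ℤ → ℝ → ℂ)
    (hDL : ∀ {f g : ℤ → ℝ → ℂ}, Good f → Good g →
      D (ncProd ℏ f g) = ncProd ℏ (D f) g + ncProd ℏ f (D g))
    (hDG : ∀ {f : ℤ → ℝ → ℂ}, Good f → Good (D f))
    (hEL : ∀ {f g : ℤ → ℝ → ℂ}, Good f → Good g →
      E (ncProd ℏ f g) = ncProd ℏ (E f) g + ncProd ℏ f (E g))
    (hEG : ∀ {f : ℤ → ℝ → ℂ}, Good f → Good (E f))
    {a b c d : ℤ → ℝ → ℂ} (ha : Good a) (hb : Good b) (hc : Good c) (hd : Good d) :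
    tau (ncProd ℏ (ncProd ℏ (ncProd ℏ a b) (D c)) (E d))
      - tau (ncProd ℏ (ncProd ℏ a (D (ncProd ℏ b c))) (E d))
      + tau (ncProd ℏ (ncProd ℏ a (D b)) (E (ncProd ℏ c d)))
      - tau (ncProd ℏ (ncProd ℏ (ncProd ℏ d a) (D b)) (E c)) = 0 := by
  have hDb : Good (D b) := hDG hb
  have hDc : Good (D c) := hDG hc
  have hEc : Good (E c) := hEG hc
  have haDb : Good (ncProd ℏ a (D b)) := ha.ncProd hDb
  -- expand the second term
  have h2 : tau (ncProd ℏ (ncProd ℏ a (D (ncProd ℏ b c))) (E d)) =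
      tau (ncProd ℏ (ncProd ℏ (ncProd ℏ a (D b)) c) (E d)) +
        tau (ncProd ℏ (ncProd ℏ (ncProd ℏ a b) (D c)) (E d)) := by
    rw [hDL hb hc, ncProd_add_right ha.1, ncProd_add_left
      (ha.ncProd (hDb.ncProd hc)).1 (ha.ncProd (hb.ncProd hDc)).1,
      tau_add ((ha.ncProd (hDb.ncProd hc)).ncProd (hEG hd))
        ((ha.ncProd (hb.ncProd hDc)).ncProd (hEG hd)),
      ← ncProd_assoc ha.1 hDb.1, ← ncProd_assoc ha.1 hb.1]
  -- expand the third term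
  have h3 : tau (ncProd ℏ (ncProd ℏ a (D b)) (E (ncProd ℏ c d))) =
      tau (ncProd ℏ (ncProd ℏ a (D b)) (ncProd ℏ (E c) d)) +
        tau (ncProd ℏ (ncProd ℏ (ncProd ℏ a (D b)) c) (E d)) := by
    rw [hEL hc hd, ncProd_add_right haDb.1,
      tau_add (haDb.ncProd (hEc.ncProd hd)) (haDb.ncProd (hc.ncProd (hEG hd))),
      ← ncProd_assoc haDb.1 hc.1]
  -- rewrite the fourth term
  have h4 : tau (ncProd ℏ (ncProd ℏ (ncProd ℏ d a) (D b)) (E c)) =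
      tau (ncProd ℏ d (ncProd ℏ (ncProd ℏ a (D b)) (E c))) := by
    rw [ncProd_assoc hd.1 ha.1, ncProd_assoc hd.1 haDb.1]
  -- rewrite the remaining third-term piece
  have h5 : tau (ncProd ℏ (ncProd ℏ a (D b)) (ncProd ℏ (E c) d)) =
      tau (ncProd ℏ d (ncProd ℏ (ncProd ℏ a (D b)) (E c))) := by
    rw [← ncProd_assoc haDb.1 hEc.1]
    exact tau_comm (haDb.ncProd hEc) hd
  rw [h2, h3, h4, h5]
  ring


lemma key {ℏ : ℝ} {a b c d : ℤ → ℝ → ℂ} (ha : Good a) (hb : Good b) (hc : Good c)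
    (hd : Good d) :
    Psi ℏ (ncProd ℏ a b) c d - Psi ℏ a (ncProd ℏ b c) d + Psi ℏ a b (ncProd ℏ c d)
      - Psi ℏ (ncProd ℏ d a) b c = 0 := by
  have hA := partA (ℏ := ℏ) d1 d2 (fun hf hg => d1_ncProd hf hg) (fun hf => hf.d1)
    (fun hf _ => d2_ncProd hf.1 _) (fun hf => hf.d2) ha hb hc hd
  have hB := partA (ℏ := ℏ) d2 d1 (fun hf _ => d2_ncProd hf.1 _) (fun hf => hf.d2)
    (fun hf hg => d1_ncProd hf hg) (fun hf => hf.d1) ha hb hc hd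
  simp only [Psi]
  linear_combination (2 * Real.pi * Complex.I)⁻¹ * hA - (2 * Real.pi * Complex.I)⁻¹ * hB


/-- `Ψ` is a Hochschild 2-cocycle. -/
theorem Psi_hochschild_cocycle (ℏ : ℝ) (f0 f1 f2 f3 : ℤ → SchwartzMap ℝ ℂ)
    (h0 : (Function.support f0).Finite) (h1 : (Function.support f1).Finite)
    (h2 : (Function.support f2).Finite) (h3 : (Function.support f3).Finite) :
    Psi ℏ (ncProd ℏ (fun n => ⇑(f0 n)) (fun n => ⇑(f1 n))) (fun n => ⇑(f2 n)) (fun n => ⇑(f3 n))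
      - Psi ℏ (fun n => ⇑(f0 n)) (ncProd ℏ (fun n => ⇑(f1 n)) (fun n => ⇑(f2 n))) (fun n => ⇑(f3 n))
      + Psi ℏ (fun n => ⇑(f0 n)) (fun n => ⇑(f1 n)) (ncProd ℏ (fun n => ⇑(f2 n)) (fun n => ⇑(f3 n)))
      - Psi ℏ (ncProd ℏ (fun n => ⇑(f3 n)) (fun n => ⇑(f0 n))) (fun n => ⇑(f1 n)) (fun n => ⇑(f2 n))
      = 0 :=
  key (good_of_schwartz f0 h0) (good_of_schwartz f1 h1) (good_of_schwartz f2 h2)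
    (good_of_schwartz f3 h3)
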